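/- Let m ≥ 1, let A be a (2m+2)×(2m+2) complex matrix, let P be an invertible (2m+2)×(2m+2) complex matrix, and let φ, ψ : ℝ×ℝ → ℂ^{2m+2} be any functions. Define the quasi double Wronskians f(A;φ,ψ) = det(A⁰φ,…,A^mφ, (−A)⁰ψ,…,(−A)^mψ), g(A;φ,ψ) = 2·det(A⁰φ,…,A^{m+1}φ, (−A)⁰ψ,…,(−A)^{m−1}ψ), h(A;φ,ψ) = −2·det(A⁰φ,…,A^{m−1}φ, (−A)⁰ψ,…,(−A)^{m+1}ψ). Then for à = P A P⁻¹, φ' = P φ, ψ' = P ψ, one has f(Ã;φ',ψ') = det(P)·f(A;φ,ψ), g(Ã;φ',ψ') = det(P)·g(A;φ,ψ), and h(Ã;φ',ψ') = det(P)·h(A;φ,ψ); consequently, at every point where f(A;φ,ψ) ≠ 0, q₀ + g(Ã;φ',ψ')/f(Ã;φ',ψ') = q₀ + g(A;φ,ψ)/f(A;φ,ψ) and r₀ + h(Ã;φ',ψ')/f(Ã;φ',ψ') = r₀ + h(A;φ,ψ)/f(A;φ,ψ) for any functions q₀, r₀. Hence a matrix A and any matrix similar to it lead to the same solution of the AKNS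 system through the transformation q = q₀ + g/f, r = r₀ + h/f. -/
import Mathlib


open Matrix Complex

noncomputable section

/-- The quasi double Wronskian `f(A;φ,ψ) = |A⁰φ,…,A^mφ ; (−A)⁰ψ,…,(−A)^mψ|`. -/
def fDet (m : ℕ) (A : Matrix (Fin (2*m+2)) (Fin (2*m+2)) ℂ)
    (v w : Fin (2*m+2) → ℂ) : ℂ :=
  Matrix.det (Matrix.of fun i j : Fin (2*m+2) =>
    if (j:ℕ) < m+1 then (A^(j:ℕ)).mulVec v i
    else ((-A)^((j:ℕ)-(m+1))).mulVec w i)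

/-- The quasi double Wronskian `g(A;φ,ψ) = 2 |A⁰φ,…,A^{m+1}φ ; (−A)⁰ψ,…,(−A)^{m−1}ψ|`. -/
def gDet (m : ℕ) (A : Matrix (Fin (2*m+2)) (Fin (2*m+2)) ℂ)
    (v w : Fin (2*m+2) → ℂ) : ℂ :=
  2 * Matrix.det (Matrix.of fun i j : Fin (2*m+2) =>
    if (j:ℕ) < m+2 then (A^(j:ℕ)).mulVec v i
    else ((-A)^((j:ℕ)-(m+2))).mulVec w i)

/-- The quasi double Wronskian `h(A;φ,ψ) = −2 |A⁰φ,…,A^{m−1}φ ; (−A)⁰ψ,…,(−A)^{m+1}ψ|`. -/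
def hDet (m : ℕ) (A : Matrix (Fin (2*m+2)) (Fin (2*m+2)) ℂ)
    (v w : Fin (2*m+2) → ℂ) : ℂ :=
  -2 * Matrix.det (Matrix.of fun i j : Fin (2*m+2) =>
    if (j:ℕ) < m then (A^(j:ℕ)).mulVec v i
    else ((-A)^((j:ℕ)-m)).mulVec w i)


private lemma conj_pow_mul {n : ℕ} (A P : Matrix (Fin n) (Fin n) ℂ) (hP : IsUnit P)
    (k : ℕ) : (P * A * P⁻¹)^k * P = P * A^k := by
  induction k with
  | zero => simp
  | succ k ih =>
    have hinv : P⁻¹ * P = 1 := Matrix.nonsing_inv_mul P ((Matrix.isUnit_iff_isUnit_det P).mp hP)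
    calc (P * A * P⁻¹)^(k+1) * P = (P * A * P⁻¹)^k * P * A * (P⁻¹ * P) := by
          rw [pow_succ]; noncomm_ring
      _ = P * A^(k+1) := by rw [hinv, ih, pow_succ]; noncomm_ring

private lemma conj_pow_mulVec {n : ℕ} (A P : Matrix (Fin n) (Fin n) ℂ) (hP : IsUnit P)
    (k : ℕ) (v : Fin n → ℂ) :
    ((P * A * P⁻¹)^k).mulVec (P.mulVec v) = P.mulVec ((A^k).mulVec v) := by
  rw [Matrix.mulVec_mulVec, Matrix.mulVec_mulVec, conj_pow_mul A P hP k]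

private lemma neg_conj {n : ℕ} (A P : Matrix (Fin n) (Fin n) ℂ) :
    -(P * A * P⁻¹) = P * (-A) * P⁻¹ := by noncomm_ring

private lemma det_conj_cols {n : ℕ} (P : Matrix (Fin n) (Fin n) ℂ)
    (c : Fin n → Fin n → ℂ) :
    Matrix.det (Matrix.of fun i j => P.mulVec (c j) i)
      = P.det * Matrix.det (Matrix.of fun i j => c j i) := by
  rw [← Matrix.det_mul]
  congr 1

/-- **Similarity invariance of the quasi double Wronskian solutions.**
Under `Ã = P A P⁻¹`, `φ' = Pφ`, `ψ' = Pψ` the quasi double Wronskians `f, g, h`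
all pick up the common factor `det P`; consequently wherever `f ≠ 0`,
`q₀ + g/f` and `r₀ + h/f` are unchanged, i.e. a matrix `A` and any matrix
similar to it lead to the same solution of the AKNS system via `q = q₀ + g/f`,
`r = r₀ + h/f`. -/
theorem similar_matrices_give_same_solution
    (m : ℕ) (hm : 1 ≤ m)
    (A P : Matrix (Fin (2*m+2)) (Fin (2*m+2)) ℂ) (hP : IsUnit P)
    (φ ψ : ℝ → ℝ → Fin (2*m+2) → ℂ)
    (q₀ r₀ : ℝ → ℝ → ℂ) :
    ∀ x t,
      (fDet m (P * A * P⁻¹) (P.mulVec (φ x t)) (P.mulVec (ψ x t))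
          = P.det * fDet m A (φ x t) (ψ x t))
      ∧ (gDet m (P * A * P⁻¹) (P.mulVec (φ x t)) (P.mulVec (ψ x t))
          = P.det * gDet m A (φ x t) (ψ x t))
      ∧ (hDet m (P * A * P⁻¹) (P.mulVec (φ x t)) (P.mulVec (ψ x t))
          = P.det * hDet m A (φ x t) (ψ x t))
      ∧ (fDet m A (φ x t) (ψ x t) ≠ 0 →
          (q₀ x t + gDet m (P * A * P⁻¹) (P.mulVec (φ x t)) (P.mulVec (ψ x t))
              / fDet m (P * A * P⁻¹) (P.mulVec (φ x t)) (P.mulVec (ψ x t))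
            = q₀ x t + gDet m A (φ x t) (ψ x t) / fDet m A (φ x t) (ψ x t))
          ∧ (r₀ x t + hDet m (P * A * P⁻¹) (P.mulVec (φ x t)) (P.mulVec (ψ x t))
              / fDet m (P * A * P⁻¹) (P.mulVec (φ x t)) (P.mulVec (ψ x t))
            = r₀ x t + hDet m A (φ x t) (ψ x t) / fDet m A (φ x t) (ψ x t))) := by
  intro x t
  have key : ∀ (c : ℕ) (M : Matrix (Fin (2*m+2)) (Fin (2*m+2)) ℂ)
      (v w : Fin (2*m+2) → ℂ),
      Matrix.det (Matrix.of fun i j : Fin (2*m+2) =>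
        if (j:ℕ) < c then ((P * M * P⁻¹)^(j:ℕ)).mulVec (P.mulVec v) i
        else ((-(P * M * P⁻¹))^((j:ℕ)-c)).mulVec (P.mulVec w) i)
      = P.det * Matrix.det (Matrix.of fun i j : Fin (2*m+2) =>
        if (j:ℕ) < c then (M^(j:ℕ)).mulVec v i
        else ((-M)^((j:ℕ)-c)).mulVec w i) := by
    intro c M v w
    rw [← det_conj_cols P (fun j i => if (j:ℕ) < c then (M^(j:ℕ)).mulVec v i
        else ((-M)^((j:ℕ)-c)).mulVec w i)]
    congr 1
    ext i j
    by_cases h : (j:ℕ) < c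
    · simp only [h, if_true, Matrix.of_apply]
      rw [conj_pow_mulVec M P hP]
    · simp only [h, if_false, Matrix.of_apply, neg_conj]
      rw [conj_pow_mulVec (-M) P hP]
  have hf := key (m+1) A (φ x t) (ψ x t)
  have hg := key (m+2) A (φ x t) (ψ x t)
  have hh := key m A (φ x t) (ψ x t)
  have hff : fDet m (P * A * P⁻¹) (P.mulVec (φ x t)) (P.mulVec (ψ x t))
      = P.det * fDet m A (φ x t) (ψ x t) := hf
  have hgg : gDet m (P * A * P⁻¹) (P.mulVec (φ x t)) (P.mulVec (ψ x t))
      = P.det * gDet m A (φ x t) (ψ x t) := by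
    unfold gDet; rw [hg]; ring
  have hhh : hDet m (P * A * P⁻¹) (P.mulVec (φ x t)) (P.mulVec (ψ x t))
      = P.det * hDet m A (φ x t) (ψ x t) := by
    unfold hDet; rw [hh]; ring
  refine ⟨hff, hgg, hhh, fun hne => ?_⟩
  have hdP : P.det ≠ 0 := ((Matrix.isUnit_iff_isUnit_det P).mp hP).ne_zero
  constructor
  · rw [hff, hgg, mul_div_mul_left _ _ hdP]
  · rw [hff, hhh, mul_div_mul_left _ _ hdP]
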